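/- For every even Schwartz function φ with φ̂ supported in [-1,1], one has (1/2)∬ φ̂(u)φ̂(v)·𝟙_{|u+v|≥1, |u-v|≤1} du dv = −(∫_{-∞}^∞ φ(x)² · (sin 2πx)/(2πx) dx − (1/2)φ(0)²). -/

import Mathlib

open MeasureTheory Real
open scoped FourierTransform

-- arithmetic lemma
lemma aux_abs (u v : ℝ) (hu : |u| ≤ 1) (hv : |v| ≤ 1) (h : 1 ≤ |u + v|) : |u - v| ≤ 1 := by
  rw [abs_le] at *
  rcases le_abs.mp h with h' | h' <;> constructor <;> linarith

-- multiplication formula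
lemma aux_mult (f g : ℝ → ℂ) (hf : Integrable f) (hg : Integrable g) :
    ∫ ξ, 𝓕 f ξ * g ξ = ∫ x, f x * 𝓕 g x := by
  have hL : Continuous fun p : ℝ × ℝ => (innerₗ ℝ) p.1 p.2 := continuous_inner
  have hflip : (innerₗ ℝ).flip = innerₗ ℝ := by
    apply LinearMap.ext; intro x; apply LinearMap.ext; intro y
    simp [real_inner_comm]
  have := VectorFourier.integral_fourierIntegral_smul_eq_flip (e := 𝐞) (μ := volume)
    (ν := volume) (L := innerₗ ℝ) (f := f) (g := g) (F := ℂ)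
    Real.continuous_fourierChar hL hf hg
  rw [hflip] at this
  simp only [smul_eq_mul] at this
  exact this

-- Fourier transform of the indicator of Ioo (-1) 1
lemma aux_ind (x : ℝ) (hx : x ≠ 0) :
    𝓕 (Set.indicator (Set.Ioo (-1:ℝ) 1) (fun _ => (1:ℂ))) x
      = ((Real.sin (2*π*x) / (π*x) : ℝ) : ℂ) := by
  rw [Real.fourier_real_eq_integral_exp_smul]
  have key : ∀ v : ℝ, Complex.exp (↑(-2*π*v*x) * Complex.I) •
      Set.indicator (Set.Ioo (-1:ℝ) 1) (fun _ => (1:ℂ)) v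
      = Set.indicator (Set.Ioo (-1:ℝ) 1)
          (fun v : ℝ => Complex.exp ((↑(-2*π*x) * Complex.I) * v)) v := by
    intro v
    by_cases hv : v ∈ Set.Ioo (-1:ℝ) 1
    · simp only [Set.indicator_of_mem hv, smul_eq_mul, mul_one]
      congr 1
      push_cast
      ring
    · simp [Set.indicator_of_notMem hv]
  simp_rw [key]
  rw [integral_indicator measurableSet_Ioo, ← integral_Ioc_eq_integral_Ioo,
    ← intervalIntegral.integral_of_le (by norm_num : (-1:ℝ) ≤ 1)]
  have hc : (↑(-2*π*x) * Complex.I : ℂ) ≠ 0 := by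
    simp [Complex.ofReal_ne_zero, Real.pi_ne_zero, hx, Complex.I_ne_zero]
  rw [integral_exp_mul_complex hc]
  have hsin : Complex.sin (2*π*x) = ((Complex.exp (-(2*π*x) * Complex.I)
      - Complex.exp ((2*π*x) * Complex.I)) * Complex.I) / 2 := by
    rw [Complex.sin]
  have ha : ((↑(-2*π*x) : ℂ) * Complex.I * ((1:ℝ):ℂ)) = -(2*(π:ℂ)*(x:ℂ)) * Complex.I := by
    push_cast; ring
  have hb : ((↑(-2*π*x) : ℂ) * Complex.I * ((-1:ℝ):ℂ)) = (2*(π:ℂ)*(x:ℂ)) * Complex.I := by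
    push_cast; ring
  have hd : Complex.exp (-(2*(π:ℂ)*(x:ℂ)) * Complex.I) - Complex.exp ((2*(π:ℂ)*(x:ℂ)) * Complex.I)
      = -2 * Complex.I * Complex.sin (2*(π:ℂ)*(x:ℂ)) := by
    rw [hsin]; ring_nf; rw [Complex.I_sq]; ring
  rw [ha, hb, hd, Complex.ofReal_div, Complex.ofReal_sin]
  have hπx : ((π:ℂ) * x) ≠ 0 := by
    simp [Real.pi_ne_zero, hx, Complex.ofReal_ne_zero]
  have hc' : ((-2*π*x : ℝ) : ℂ) = -2*(π:ℂ)*(x:ℂ) := by push_cast; ring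
  rw [hc']
  push_cast
  have hden : (-2*(π:ℂ)*(x:ℂ)) * Complex.I ≠ 0 := by
    simp [Real.pi_ne_zero, hx, Complex.I_ne_zero, Complex.ofReal_ne_zero]
  rw [div_eq_div_iff hden hπx]
  ring


theorem stmt_2 (φ : SchwartzMap ℝ ℂ) (hφeven : ∀ x : ℝ, φ (-x) = φ x)
    (hsupp : Function.support (𝓕 (fun x : ℝ => φ x)) ⊆ Set.Icc (-1 : ℝ) 1) :
    (1 / 2 : ℂ) *
        ∫ p : ℝ × ℝ,
          𝓕 (fun x : ℝ => φ x) p.1 * 𝓕 (fun x : ℝ => φ x) p.2 *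
            (if 1 ≤ |p.1 + p.2| ∧ |p.1 - p.2| ≤ 1 then (1 : ℂ) else 0)
      = -((∫ x : ℝ, (φ x) ^ 2 * ((Real.sin (2 * π * x) / (2 * π * x) : ℝ) : ℂ))
            - (1 / 2) * (φ 0) ^ 2) := by
  classical
  set g : ℝ → ℂ := 𝓕 (fun x : ℝ => φ x) with hgdef
  have hg_int : Integrable g := (SchwartzMap.fourierTransformCLM ℂ φ).integrable
  have hg_cont : Continuous g := (SchwartzMap.fourierTransformCLM ℂ φ).continuous
  obtain ⟨C, hC⟩ : ∃ C : ℝ, ∀ u : ℝ, ‖g u‖ ≤ C :=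
    ⟨‖(SchwartzMap.fourierTransformCLM ℂ φ).toBoundedContinuousFunction‖,
      fun u => (SchwartzMap.fourierTransformCLM ℂ φ).toBoundedContinuousFunction.norm_coe_le_norm u⟩
  obtain ⟨D, hD⟩ : ∃ D : ℝ, ∀ x : ℝ, ‖φ x‖ ≤ D :=
    ⟨‖φ.toBoundedContinuousFunction‖, fun u => φ.toBoundedContinuousFunction.norm_coe_le_norm u⟩
  have hgg_int : Integrable (fun p : ℝ × ℝ => g p.1 * g p.2) := by
    have := hg_int.mul_prod hg_int
    rwa [← Measure.volume_eq_prod] at this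
  set T : Set (ℝ × ℝ) := {p : ℝ × ℝ | |p.1 + p.2| < 1} with hTdef
  have hTmeas : MeasurableSet T := by
    have : IsOpen T := by
      have : Continuous fun p : ℝ × ℝ => |p.1 + p.2| := by fun_prop
      exact isOpen_Iio.preimage this
    exact this.measurableSet
  have hH_int : Integrable (T.indicator fun p : ℝ × ℝ => g p.1 * g p.2) :=
    hgg_int.indicator hTmeas
  -- pointwise identity for the main integrand
  have hpt : ∀ p : ℝ × ℝ,
      g p.1 * g p.2 * (if 1 ≤ |p.1 + p.2| ∧ |p.1 - p.2| ≤ 1 then (1 : ℂ) else 0)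
        = g p.1 * g p.2 - T.indicator (fun q : ℝ × ℝ => g q.1 * g q.2) p := by
    intro p
    by_cases h1 : g p.1 = 0
    · simp [Set.indicator_apply, h1]
    by_cases h2 : g p.2 = 0
    · simp [Set.indicator_apply, h2]
    have hu : |p.1| ≤ 1 := abs_le.2 (Set.mem_Icc.1 (hsupp (Function.mem_support.2 h1)))
    have hv : |p.2| ≤ 1 := abs_le.2 (Set.mem_Icc.1 (hsupp (Function.mem_support.2 h2)))
    by_cases hs : 1 ≤ |p.1 + p.2|
    · have habs : |p.1 - p.2| ≤ 1 := aux_abs _ _ hu hv hs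
      have hnT : p ∉ T := by simp [hTdef, not_lt.2 hs]
      rw [Set.indicator_of_notMem hnT, if_pos ⟨hs, habs⟩]
      ring
    · have hT : p ∈ T := by simpa [hTdef] using not_le.1 hs
      rw [Set.indicator_of_mem hT, if_neg (fun h => hs h.1)]
      ring
  -- inversion: value at 0
  have hinv : 𝓕⁻ (𝓕 fun x : ℝ => φ x) = fun x : ℝ => φ x :=
    φ.continuous.fourierInv_fourier_eq φ.integrable hg_int
  have hphi0 : (φ 0 : ℂ) = ∫ u, g u := by
    have h0 : 𝓕⁻ g 0 = φ 0 := congrFun hinv 0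
    rw [← h0, Real.fourierInv_eq]
    simp
  -- inversion: pointwise formula
  have hφx : ∀ x : ℝ, (φ x : ℂ) = ∫ u, Complex.exp (↑(2 * π * u * x) * Complex.I) * g u := by
    intro x
    have h0 : 𝓕⁻ g x = φ x := congrFun hinv x
    rw [← h0, Real.fourierInv_eq_fourier_neg,
      Real.fourier_real_eq_integral_exp_smul]
    congr 1
    funext u
    rw [smul_eq_mul]
    congr 2
    push_cast
    ring
  -- convolution identity
  have hconv : ∀ t : ℝ, 𝓕 (fun x : ℝ => φ x * φ x) t = ∫ u, g u * g (t - u) := by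
    intro t
    rw [Real.fourier_real_eq_integral_exp_smul]
    have step1 : ∀ x : ℝ, Complex.exp (↑(-2 * π * x * t) * Complex.I) • (φ x * φ x)
        = ∫ u, (Complex.exp (↑(-2 * π * x * t) * Complex.I) * φ x)
            * (Complex.exp (↑(2 * π * u * x) * Complex.I) * g u) := by
      intro x
      rw [smul_eq_mul, show (Complex.exp (↑(-2 * π * x * t) * Complex.I) * (φ x * φ x))
        = (Complex.exp (↑(-2 * π * x * t) * Complex.I) * φ x) * φ x by ring, hφx x,
        ← integral_const_mul]
    simp_rw [step1]
    rw [integral_integral_swap]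
    · congr 1
      funext u
      have inner : ∀ x : ℝ, (Complex.exp (↑(-2 * π * x * t) * Complex.I) * φ x)
          * (Complex.exp (↑(2 * π * u * x) * Complex.I) * g u)
          = (Complex.exp (↑(-2 * π * x * (t - u)) * Complex.I) * φ x) * g u := by
        intro x
        rw [show (Complex.exp (↑(-2 * π * x * t) * Complex.I) * φ x)
            * (Complex.exp (↑(2 * π * u * x) * Complex.I) * g u)
            = (Complex.exp (↑(-2 * π * x * t) * Complex.I)
              * Complex.exp (↑(2 * π * u * x) * Complex.I)) * φ x * g u by ring,
          ← Complex.exp_add]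
        congr 3
        push_cast
        ring
      simp_rw [inner]
      rw [integral_mul_const]
      have : 𝓕 (fun x : ℝ => φ x) (t - u)
          = ∫ x, Complex.exp (↑(-2 * π * x * (t - u)) * Complex.I) * φ x := by
        rw [Real.fourier_real_eq_integral_exp_smul]
        simp_rw [smul_eq_mul]
      rw [← this, ← hgdef]
      ring
    · -- integrability on the product
      have hbint : Integrable (fun p : ℝ × ℝ => ‖φ p.1‖ * ‖g p.2‖) := by
        have h1 : Integrable (fun x : ℝ => ‖φ x‖) := φ.integrable.norm
        have := h1.mul_prod hg_int.norm
        rwa [← Measure.volume_eq_prod] at this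
      refine hbint.mono' ?_ ?_
      · apply Continuous.aestronglyMeasurable
        have c1 : Continuous fun p : ℝ × ℝ =>
            Complex.exp (↑(-2 * π * p.1 * t) * Complex.I) := by
          apply Complex.continuous_exp.comp
          exact (Complex.continuous_ofReal.comp (by fun_prop)).mul continuous_const
        have c2 : Continuous fun p : ℝ × ℝ =>
            Complex.exp (↑(2 * π * p.2 * p.1) * Complex.I) := by
          apply Complex.continuous_exp.comp
          exact (Complex.continuous_ofReal.comp (by fun_prop)).mul continuous_const
        exact (c1.mul (φ.continuous.comp continuous_fst)).mul
          (c2.mul (hg_cont.comp continuous_snd))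
      · filter_upwards with p
        simp only [Function.uncurry, norm_mul,
          Complex.norm_exp_ofReal_mul_I, one_mul]
        exact le_of_eq (by ring)
  -- integrability of indicator and of φ·φ
  have hh₁_int : Integrable ((Set.Ioo (-1:ℝ) 1).indicator (fun _ => (1:ℂ))) := by
    rw [integrable_indicator_iff measurableSet_Ioo]
    exact integrableOn_const measure_Ioo_lt_top.ne
  have hφφ_int : Integrable (fun x : ℝ => φ x * φ x) :=
    φ.integrable.bdd_mul φ.continuous.aestronglyMeasurable (ae_of_all _ hD)
  have hmult := aux_mult (fun x : ℝ => φ x * φ x)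
    ((Set.Ioo (-1:ℝ) 1).indicator (fun _ => (1:ℂ))) hφφ_int hh₁_int
  have hmultL : ∫ t, 𝓕 (fun x : ℝ => φ x * φ x) t
        * (Set.Ioo (-1:ℝ) 1).indicator (fun _ => (1:ℂ)) t
      = ∫ t in Set.Ioo (-1:ℝ) 1, 𝓕 (fun x : ℝ => φ x * φ x) t := by
    rw [← integral_indicator measurableSet_Ioo]
    congr 1
    funext t
    by_cases ht : t ∈ Set.Ioo (-1:ℝ) 1
    · simp [Set.indicator_of_mem ht]
    · simp [Set.indicator_of_notMem ht]
  have hmultR : ∫ x, (φ x * φ x) * 𝓕 ((Set.Ioo (-1:ℝ) 1).indicator (fun _ => (1:ℂ))) x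
      = 2 * ∫ x : ℝ, (φ x) ^ 2 * ((Real.sin (2 * π * x) / (2 * π * x) : ℝ) : ℂ) := by
    rw [← integral_const_mul]
    apply integral_congr_ae
    have h0 : ({(0:ℝ)} : Set ℝ)ᶜ ∈ ae (volume : Measure ℝ) :=
      compl_mem_ae_iff.2 (measure_singleton 0)
    filter_upwards [h0] with x hx
    have hx0 : x ≠ 0 := by simpa using hx
    rw [aux_ind x hx0]
    have hre : (Real.sin (2*π*x) / (π*x)) = 2 * (Real.sin (2*π*x) / (2*π*x)) := by
      field_simp
    rw [hre]
    push_cast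
    ring
  have hDkey : ∫ t in Set.Ioo (-1:ℝ) 1, 𝓕 (fun x : ℝ => φ x * φ x) t
      = 2 * ∫ x : ℝ, (φ x) ^ 2 * ((Real.sin (2 * π * x) / (2 * π * x) : ℝ) : ℂ) := by
    rw [← hmultL, hmult, hmultR]
  -- pointwise: relating the one-dim indicator to T
  have hptH : ∀ u v : ℝ, g u * g v * (Set.Ioo (-1:ℝ) 1).indicator (fun _ => (1:ℂ)) (u + v)
      = T.indicator (fun q : ℝ × ℝ => g q.1 * g q.2) (u, v) := by
    intro u v
    by_cases h : |u + v| < 1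
    · have h1 : u + v ∈ Set.Ioo (-1:ℝ) 1 := Set.mem_Ioo.2 (abs_lt.1 h)
      have h2 : ((u, v) : ℝ × ℝ) ∈ T := by simp [hTdef, h]
      rw [Set.indicator_of_mem h1, Set.indicator_of_mem h2]
      ring
    · have h1 : u + v ∉ Set.Ioo (-1:ℝ) 1 := fun hm => h (abs_lt.2 (Set.mem_Ioo.1 hm))
      have h2 : ((u, v) : ℝ × ℝ) ∉ T := by simp [hTdef, h]
      rw [Set.indicator_of_notMem h1, Set.indicator_of_notMem h2]
      ring
  -- the big swap
  have hswap : ∫ t in Set.Ioo (-1:ℝ) 1, (∫ u, g u * g (t - u))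
      = ∫ p : ℝ × ℝ, T.indicator (fun q : ℝ × ℝ => g q.1 * g q.2) p := by
    rw [← integral_indicator measurableSet_Ioo]
    have e1 : ∀ t : ℝ, (Set.Ioo (-1:ℝ) 1).indicator (fun t => ∫ u, g u * g (t - u)) t
        = ∫ u, (Set.Ioo (-1:ℝ) 1).indicator (fun _ => (1:ℂ)) t * (g u * g (t - u)) := by
      intro t
      by_cases ht : t ∈ Set.Ioo (-1:ℝ) 1
      · simp [Set.indicator_of_mem ht]
      · simp [Set.indicator_of_notMem ht]
    simp_rw [e1]
    have hFint : Integrable (Function.uncurry fun t u : ℝ =>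
        (Set.Ioo (-1:ℝ) 1).indicator (fun _ => (1:ℂ)) t * (g u * g (t - u)))
        ((volume : Measure ℝ).prod volume) := by
      have hb1 : Integrable ((Set.Ioo (-1:ℝ) 1).indicator (fun _ => C)) := by
        rw [integrable_indicator_iff measurableSet_Ioo]
        exact integrableOn_const measure_Ioo_lt_top.ne
      have hbint := hb1.mul_prod hg_int.norm
      refine hbint.mono' ?_ ?_
      · have m1 : AEStronglyMeasurable
            (fun p : ℝ × ℝ => (Set.Ioo (-1:ℝ) 1).indicator (fun _ => (1:ℂ)) p.1)
            ((volume : Measure ℝ).prod volume) :=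
          ((measurable_const.indicator measurableSet_Ioo).comp measurable_fst).aestronglyMeasurable
        have m2 : Continuous fun p : ℝ × ℝ => g p.2 * g (p.1 - p.2) :=
          (hg_cont.comp continuous_snd).mul (hg_cont.comp (continuous_fst.sub continuous_snd))
        exact m1.mul m2.aestronglyMeasurable
      · filter_upwards with p
        simp only [Function.uncurry]
        by_cases hp : p.1 ∈ Set.Ioo (-1:ℝ) 1
        · simp only [Set.indicator_of_mem hp, one_mul, norm_mul]
          nlinarith [hC (p.1 - p.2), norm_nonneg (g p.2), norm_nonneg (g (p.1 - p.2))]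
        · simp [Set.indicator_of_notMem hp]
    rw [integral_integral_swap hFint]
    have e2 : ∀ u : ℝ, (∫ t, (Set.Ioo (-1:ℝ) 1).indicator (fun _ => (1:ℂ)) t * (g u * g (t - u)))
        = ∫ v, T.indicator (fun q : ℝ × ℝ => g q.1 * g q.2) (u, v) := by
      intro u
      rw [← integral_add_right_eq_self
        (fun t => (Set.Ioo (-1:ℝ) 1).indicator (fun _ => (1:ℂ)) t * (g u * g (t - u))) u]
      congr 1
      funext v
      simp only [add_sub_cancel_right]
      rw [← hptH u v, add_comm v u]
      ring
    simp_rw [e2]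
    have hint2 : Integrable (Function.uncurry fun u v : ℝ =>
        T.indicator (fun q : ℝ × ℝ => g q.1 * g q.2) (u, v))
        ((volume : Measure ℝ).prod volume) := by
      have := hH_int
      rw [Measure.volume_eq_prod] at this
      exact this
    rw [integral_integral hint2, ← Measure.volume_eq_prod]
  have hHval : ∫ p : ℝ × ℝ, T.indicator (fun q : ℝ × ℝ => g q.1 * g q.2) p
      = 2 * ∫ x : ℝ, (φ x) ^ 2 * ((Real.sin (2 * π * x) / (2 * π * x) : ℝ) : ℂ) := by
    rw [← hswap, ← hDkey]
    congr 1
    funext t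
    exact (hconv t).symm
  have hmain : ∫ p : ℝ × ℝ,
        g p.1 * g p.2 * (if 1 ≤ |p.1 + p.2| ∧ |p.1 - p.2| ≤ 1 then (1:ℂ) else 0)
      = (∫ u, g u) * (∫ u, g u)
        - 2 * ∫ x : ℝ, (φ x) ^ 2 * ((Real.sin (2 * π * x) / (2 * π * x) : ℝ) : ℂ) := by
    have h1 : ∫ p : ℝ × ℝ,
          g p.1 * g p.2 * (if 1 ≤ |p.1 + p.2| ∧ |p.1 - p.2| ≤ 1 then (1:ℂ) else 0)
        = ∫ p : ℝ × ℝ, (g p.1 * g p.2 - T.indicator (fun q : ℝ × ℝ => g q.1 * g q.2) p) := by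
      congr 1
      funext p
      exact hpt p
    rw [h1, integral_sub hgg_int hH_int, hHval]
    congr 1
    rw [Measure.volume_eq_prod, integral_prod_mul]
  rw [hmain, ← hphi0]
  ring
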